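/- Let 𝒞 be a codebook of M codewords with Xⁿ uniform on 𝒞 and Yⁿ a channel output, with metric q and Φ(x,y) = Pr(q(X̃ⁿ,y) ≥ q(x,y)) where X̃ⁿ is an independent copy of Xⁿ. For R > Θ ≥ 0 with M = e^{nR}, the list-decoding error probability P_e^Θ = Pr(|{x' ∈ 𝒞 : q(x',Yⁿ) ≥ q(Xⁿ,Yⁿ)}| > e^{nΘ}) satisfies P_e^Θ ≥ 1 − (1/(R−Θ)) · E[ −(1/n) log Φ(Xⁿ,Yⁿ) ]. -/

import Mathlib

open Finset Real
open scoped Classical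

/-- Probability of an event for a finite probability space given by a weight
function `p`. -/
noncomputable def prob {Ω : Type} [Fintype Ω] (p : Ω → ℝ) (E : Set Ω) : ℝ :=
  ∑ ω ∈ Finset.univ.filter (fun ω => ω ∈ E), p ω

/-- Theorem 8 (Fano-type lower bound for mismatched list decoding):
for `M = e^{nR}` and list size `e^{nΘ}`,
`P_e^Θ ≥ 1 - (1/(R-Θ)) E[-(1/n) log Φ(Xⁿ,Yⁿ)]`. -/
theorem stmt_11 {Ω 𝒳 𝒴 : Type} [Fintype Ω] [Fintype 𝒳] [DecidableEq 𝒳]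
    (p : Ω → ℝ) (hp : ∀ ω, 0 ≤ p ω) (hsum : ∑ ω, p ω = 1)
    (C : Finset 𝒳) (M : ℕ) (hC : C.card = M) (hM : 1 ≤ M)
    (n R Θ : ℝ) (hn : 0 < n) (hΘ : 0 ≤ Θ) (hRΘ : Θ < R)
    (hMR : (M : ℝ) = Real.exp (n * R))
    (X Xt : Ω → 𝒳) (Y : Ω → 𝒴)
    (hXC : ∀ ω, X ω ∈ C)
    (hXunif : ∀ x ∈ C, prob p {ω | X ω = x} = 1 / M)
    (hXtC : ∀ ω, Xt ω ∈ C)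
    (hXtunif : ∀ x ∈ C, prob p {ω | Xt ω = x} = 1 / M)
    (hindep : ∀ (x x' : 𝒳) (y : 𝒴),
      prob p {ω | Xt ω = x' ∧ X ω = x ∧ Y ω = y}
        = prob p {ω | Xt ω = x'} * prob p {ω | X ω = x ∧ Y ω = y})
    (q : 𝒳 → 𝒴 → ℝ)
    (Φ : 𝒳 → 𝒴 → ℝ)
    (hΦ : ∀ x y, Φ x y = prob p {ω | q (Xt ω) y ≥ q x y}) :
    prob p {ω | ((C.filter (fun x' => q x' (Y ω) ≥ q (X ω) (Y ω))).card : ℝ)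
        > Real.exp (n * Θ)}
      ≥ 1 - (1 / (R - Θ)) *
          ∑ ω, p ω * (-(1 / n) * Real.log (Φ (X ω) (Y ω))) := by
  classical
  have hM0 : (0:ℝ) < M := by exact_mod_cast Nat.lt_of_lt_of_le Nat.zero_lt_one hM
  set L : Ω → ℕ := fun ω => (C.filter (fun x' => q x' (Y ω) ≥ q (X ω) (Y ω))).card with hLdef
  have hL1 : ∀ ω, 1 ≤ L ω := by
    intro ω
    have hx : X ω ∈ C.filter (fun x' => q x' (Y ω) ≥ q (X ω) (Y ω)) := by
      simp [hXC ω]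
    exact Finset.card_pos.mpr ⟨_, hx⟩
  have hLM : ∀ ω, L ω ≤ M := fun ω => hC ▸ Finset.card_le_card (Finset.filter_subset _ _)
  have hΦval : ∀ ω, Φ (X ω) (Y ω) = (L ω : ℝ) / M := by
    intro ω
    rw [hΦ]
    unfold prob
    have h1 : Finset.univ.filter (fun ω' => ω' ∈ {ω' | q (Xt ω') (Y ω) ≥ q (X ω) (Y ω)})
        = Finset.univ.filter
            (fun ω' => Xt ω' ∈ C.filter (fun x' => q x' (Y ω) ≥ q (X ω) (Y ω))) := by
      apply Finset.filter_congr
      intro ω' _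
      simp [hXtC ω']
    rw [h1, ← Finset.sum_fiberwise_eq_sum_filter]
    have h2 : ∀ x' ∈ C.filter (fun x' => q x' (Y ω) ≥ q (X ω) (Y ω)),
        (∑ ω' ∈ Finset.univ.filter (fun ω' => Xt ω' = x'), p ω') = 1 / M := by
      intro x' hx'
      have h := hXtunif x' (Finset.mem_filter.mp hx').1
      unfold prob at h
      have e : Finset.univ.filter (fun ω' => Xt ω' = x')
          = Finset.univ.filter (fun a => a ∈ {ω : Ω | Xt ω = x'}) := by
        apply Finset.filter_congr; intro a _; simp
      rw [e]; convert h using 2; congr!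
    rw [Finset.sum_congr rfl h2, Finset.sum_const, nsmul_eq_mul]
    simp [hLdef, div_eq_mul_inv]
  have hΦpos : ∀ ω, 0 < Φ (X ω) (Y ω) := by
    intro ω
    rw [hΦval]
    have : (0:ℝ) < L ω := by exact_mod_cast hL1 ω
    positivity
  have hfnn : ∀ ω, 0 ≤ -(1 / n) * Real.log (Φ (X ω) (Y ω)) := by
    intro ω
    have hle1 : Φ (X ω) (Y ω) ≤ 1 := by
      rw [hΦval]
      rw [div_le_one hM0]
      exact_mod_cast hLM ω
    have := Real.log_nonpos (le_of_lt (hΦpos ω)) hle1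
    have h1n : (0:ℝ) < 1 / n := by positivity
    nlinarith
  have hRT : (0:ℝ) < R - Θ := by linarith
  -- complement bound
  set Epred : Ω → Prop := fun ω => ((L ω : ℝ) > Real.exp (n * Θ)) with hEpred
  have hcomp : ∀ ω, ¬ Epred ω → R - Θ ≤ -(1 / n) * Real.log (Φ (X ω) (Y ω)) := by
    intro ω hωc
    have hLle : (L ω : ℝ) ≤ Real.exp (n * Θ) := not_lt.mp hωc
    have hΦle : Φ (X ω) (Y ω) ≤ Real.exp (n * Θ - n * R) := by
      rw [hΦval, Real.exp_sub, ← hMR]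
      exact (div_le_div_iff_of_pos_right hM0).mpr hLle
    have hlog : Real.log (Φ (X ω) (Y ω)) ≤ n * Θ - n * R := by
      calc Real.log (Φ (X ω) (Y ω)) ≤ Real.log (Real.exp (n * Θ - n * R)) :=
            Real.log_le_log (hΦpos ω) hΦle
        _ = n * Θ - n * R := Real.log_exp _
    have h1n : (0:ℝ) < 1 / n := by positivity
    have := mul_le_mul_of_nonneg_left hlog (le_of_lt h1n)
    have hne : (n:ℝ) ≠ 0 := ne_of_gt hn
    have heq : (1 / n) * (n * Θ - n * R) = Θ - R := by field_simp
    nlinarith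
  -- split total probability
  have hsplit : prob p {ω | ((((C.filter (fun x' => q x' (Y ω) ≥ q (X ω) (Y ω))).card : ℝ))
        > Real.exp (n * Θ))}
      + ∑ ω ∈ Finset.univ.filter (fun ω => ¬ Epred ω), p ω = 1 := by
    unfold prob
    rw [← hsum]
    have : Finset.univ.filter (fun ω => ω ∈ {ω | (((C.filter (fun x' => q x' (Y ω) ≥ q (X ω) (Y ω))).card : ℝ)) > Real.exp (n * Θ)})
        = Finset.univ.filter Epred := by
      apply Finset.filter_congr; intro ω _; simp [hEpred, hLdef]
    rw [this]
    exact Finset.sum_filter_add_sum_filter_not _ _ _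
  set Pc : ℝ := ∑ ω ∈ Finset.univ.filter (fun ω => ¬ Epred ω), p ω with hPc
  have hkey : (R - Θ) * Pc ≤ ∑ ω, p ω * (-(1 / n) * Real.log (Φ (X ω) (Y ω))) := by
    calc (R - Θ) * Pc = ∑ ω ∈ Finset.univ.filter (fun ω => ¬ Epred ω), (R - Θ) * p ω := by
          rw [hPc, Finset.mul_sum]
      _ ≤ ∑ ω ∈ Finset.univ.filter (fun ω => ¬ Epred ω),
            p ω * (-(1 / n) * Real.log (Φ (X ω) (Y ω))) := by
          apply Finset.sum_le_sum
          intro ω hω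
          rw [mul_comm]
          exact mul_le_mul_of_nonneg_left (hcomp ω (Finset.mem_filter.mp hω).2) (hp ω)
      _ ≤ ∑ ω, p ω * (-(1 / n) * Real.log (Φ (X ω) (Y ω))) := by
          apply Finset.sum_le_sum_of_subset_of_nonneg (Finset.filter_subset _ _)
          intro ω _ _
          exact mul_nonneg (hp ω) (hfnn ω)
  have hPe : prob p {ω | ((((C.filter (fun x' => q x' (Y ω) ≥ q (X ω) (Y ω))).card : ℝ))
        > Real.exp (n * Θ))} = 1 - Pc := by linarith
  rw [hPe]
  have hfin : Pc ≤ 1 / (R - Θ) * ∑ ω, p ω * (-(1 / n) * Real.log (Φ (X ω) (Y ω))) := by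
    rw [one_div]
    calc Pc = (R - Θ)⁻¹ * ((R - Θ) * Pc) := by
          rw [inv_mul_cancel_left₀ (ne_of_gt hRT)]
      _ ≤ _ := mul_le_mul_of_nonneg_left hkey (inv_nonneg.mpr (le_of_lt hRT))
  linarith
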